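/- arXiv:1812.04360 — 4 statements merged into one kernel-verified Lean document; each statement's English description precedes it below -/
import Mathlib

section
/- The inclusion E_n ⊆ ℰ_n of subgroups of K_nˣ induces a group isomorphism E_n/C_n ≅ ℰ_n/𝒞_n; precisely, the homomorphism from the quotient group E_n/C_n to ℰ_n/𝒞_n induced by the inclusion is bijective. (Lemma 6.2, first isomorphism) -/
/-- The group `ℰ` of `p`-units of a number field `K`, i.e. the unit group of
`𝒪_K[1/p]`, viewed as a subgroup of `Kˣ`.  Here `𝒪_K[1/p]` is realized as the
subring of `K` generated by the integral closure of `ℤ` together with `p⁻¹`. -/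
noncomputable def pUnits (K : Type*) [Field K] (p : ℕ) : Subgroup Kˣ :=
  (Algebra.adjoin ℤ (insert ((p : K)⁻¹) (integralClosure ℤ K : Set K))).toSubmonoid.units

/-- The group `E` of units of the ring of integers of `K`, viewed as a subgroup
of `Kˣ`. -/
noncomputable def intUnits (K : Type*) [Field K] : Subgroup Kˣ :=
  (integralClosure ℤ K).toSubmonoid.units

/-- The group `𝒞` of cyclotomic `p`-units: the subgroup of `Kˣ` generated by the
`p^n`-th roots of unity together with the elements `1 - ζ^k` for `0 < k < p^n`. -/
noncomputable def cycPUnits (K : Type*) [Field K] (p n : ℕ) (ζ : K) : Subgroup Kˣ :=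
  Subgroup.closure
    {x : Kˣ | (x : K) ^ p ^ n = 1 ∨ ∃ k : ℕ, 0 < k ∧ k < p ^ n ∧ (x : K) = 1 - ζ ^ k}

section Aux

variable (p : ℕ+) (n' : ℕ) {K : Type*} [Field K] [CharZero K]

/-- Key decomposition: every `p`-unit is a unit times an integer power of `1 - ζ`. -/
theorem pUnits_decomp [hfact : Fact ((p : ℕ)).Prime]
    [IsCyclotomicExtension {(p : ℕ) ^ (n' + 1)} ℚ K]
    (ζ : K) (hζ' : IsPrimitiveRoot ζ ((p ^ (n' + 1) : ℕ+) : ℕ)) :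
    ∀ x : Kˣ, x ∈ pUnits K p →
      ∃ e : Kˣ, e ∈ intUnits K ∧ e⁻¹ * x ∈ cycPUnits K p (n' + 1) ζ := by
  have hp : (p : ℕ).Prime := hfact.out
  haveI : NumberField K := IsCyclotomicExtension.numberField {(p : ℕ) ^ (n' + 1)} ℚ K
  set ζO : NumberField.RingOfIntegers K := hζ'.toInteger with hζOdef
  have hζO : IsPrimitiveRoot ζO ((p : ℕ) ^ (n' + 1)) := by
    have := (show IsPrimitiveRoot ζ ((p : ℕ) ^ (n' + 1)) by
      rwa [PNat.pow_coe] at hζ').toInteger_isPrimitiveRoot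
    exact this
  have hζpow : IsPrimitiveRoot ζ ((p : ℕ) ^ (n' + 1)) := by
    rwa [PNat.pow_coe] at hζ'
  haveI : NeZero ((p : ℕ) ^ (n' + 1)) := ⟨pow_ne_zero _ hp.ne_zero⟩
  have hπ : Prime (1 - ζO) := by
    have h := hζpow.zeta_sub_one_prime
    have h2 : (1 - ζO) = -(ζO - 1) := by ring
    rw [h2]; exact h.neg
  -- `p` divides a power of `1 - ζO` in the ring of integers
  set T : ℕ := (primitiveRoots ((p : ℕ) ^ (n' + 1)) (NumberField.RingOfIntegers K)).card with hT
  have hpdvd : ((p : ℕ) : NumberField.RingOfIntegers K) ∣ (1 - ζO) ^ T := by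
    have h1 : (((p : ℕ) : NumberField.RingOfIntegers K)) =
        Polynomial.eval 1 (Polynomial.cyclotomic ((p : ℕ) ^ (n' + 1))
          (NumberField.RingOfIntegers K)) :=
      (Polynomial.eval_one_cyclotomic_prime_pow n').symm
    rw [Polynomial.cyclotomic_eq_prod_X_sub_primitiveRoots hζO, Polynomial.eval_prod] at h1
    simp only [Polynomial.eval_sub, Polynomial.eval_X, Polynomial.eval_C] at h1
    rw [h1, hT, ← Finset.prod_const]
    refine Finset.prod_dvd_prod_of_dvd _ _ ?_
    intro μ hμmem
    have hμ : IsPrimitiveRoot μ ((p : ℕ) ^ (n' + 1)) :=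
      (mem_primitiveRoots (by positivity)).1 hμmem
    obtain ⟨i, -, hi⟩ := hμ.eq_pow_of_pow_eq_one hζO.pow_eq_one
    rw [← hi]
    simpa using sub_dvd_pow_sub_pow 1 μ i
  obtain ⟨s, -, ⟨w, hw⟩⟩ := (dvd_prime_pow hπ _).1 hpdvd
  -- structure of elements of `𝒪[1/p]`
  have hq0 : (((p : ℕ) : K)) ≠ 0 := Nat.cast_ne_zero.2 hp.ne_zero
  have hstruct : ∀ x : K,
      x ∈ Algebra.adjoin ℤ (insert (((p : ℕ) : K))⁻¹ (integralClosure ℤ K : Set K)) →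
      ∃ (a : NumberField.RingOfIntegers K) (m : ℕ),
        x * ((p : ℕ) : K) ^ m = algebraMap (NumberField.RingOfIntegers K) K a := by
    intro x hx
    induction hx using Algebra.adjoin_induction with
    | mem y hy =>
      rcases hy with rfl | hy
      · exact ⟨1, 1, by rw [pow_one, inv_mul_cancel₀ hq0, map_one]⟩
      · exact ⟨⟨y, hy⟩, 0, by simp⟩
    | algebraMap r =>
      refine ⟨algebraMap ℤ (NumberField.RingOfIntegers K) r, 0, ?_⟩
      rw [pow_zero, mul_one, ← IsScalarTower.algebraMap_apply]
    | add x y hx hy ihx ihy =>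
      obtain ⟨a, m, ha⟩ := ihx; obtain ⟨b, l, hb⟩ := ihy
      refine ⟨a * ((p : ℕ) : NumberField.RingOfIntegers K) ^ l +
        b * ((p : ℕ) : NumberField.RingOfIntegers K) ^ m, m + l, ?_⟩
      rw [map_add, map_mul, map_mul, map_pow, map_pow, map_natCast, ← ha, ← hb]
      ring
    | mul x y hx hy ihx ihy =>
      obtain ⟨a, m, ha⟩ := ihx; obtain ⟨b, l, hb⟩ := ihy
      refine ⟨a * b, m + l, ?_⟩
      rw [map_mul, ← ha, ← hb]
      ring
  -- the cyclotomic `p`-unit `1 - ζ` as an element of `Kˣ`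
  have hζne1 : ζ ≠ 1 := hζpow.ne_one (Nat.one_lt_pow (by omega) hp.one_lt)
  set πK : Kˣ := Units.mk0 (1 - ζ) (sub_ne_zero.2 (Ne.symm hζne1)) with hπK
  have hπKC : πK ∈ cycPUnits K p (n' + 1) ζ := by
    refine Subgroup.subset_closure (Or.inr ⟨1, one_pos, ?_, by simp [hπK]⟩)
    exact Nat.one_lt_pow (by omega) hp.one_lt
  set ι : (NumberField.RingOfIntegers K)ˣ →* Kˣ :=
    Units.map (algebraMap (NumberField.RingOfIntegers K) K).toMonoidHom with hι
  have hιmem : ∀ v : (NumberField.RingOfIntegers K)ˣ, ι v ∈ intUnits K := by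
    intro v
    constructor
    · exact (v : NumberField.RingOfIntegers K).2
    · show ((((ι v)⁻¹ : Kˣ)) : K) ∈ integralClosure ℤ K
      rw [← map_inv ι v]
      exact ((v⁻¹ : (NumberField.RingOfIntegers K)ˣ) :
        NumberField.RingOfIntegers K).2
  set pu : Kˣ := Units.mk0 ((p : ℕ) : K) hq0 with hpu
  -- key relation: `pu * ι w = πK ^ s`
  have h2 : pu * ι w = πK ^ s := by
    rw [Units.ext_iff]
    have := congrArg (algebraMap (NumberField.RingOfIntegers K) K) hw
    rw [map_mul, map_pow, map_natCast, map_sub, map_one] at this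
    have hz : algebraMap (NumberField.RingOfIntegers K) K ζO = ζ := rfl
    simpa [hpu, hπK, hι, Units.val_mul, Units.val_pow_eq_pow_val, hz] using this
  -- main decomposition of a `p`-unit
  intro x hx
  obtain ⟨hx1, hx2⟩ := hx
  obtain ⟨a, m, ha⟩ := hstruct (x : K) hx1
  obtain ⟨b, l, hb⟩ := hstruct ((x⁻¹ : Kˣ) : K) hx2
  have hab : a * b = ((p : ℕ) : NumberField.RingOfIntegers K) ^ (m + l) := by
    apply NumberField.RingOfIntegers.coe_injective
    rw [map_mul, ← ha, ← hb, map_pow, map_natCast, pow_add, mul_mul_mul_comm,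
      Units.mul_inv, one_mul]
  have hadvd : a ∣ (1 - ζO) ^ (T * (m + l)) := by
    rw [pow_mul]
    exact dvd_trans ⟨b, hab.symm⟩ (pow_dvd_pow_of_dvd hpdvd _)
  obtain ⟨i, -, ⟨u, hu⟩⟩ := (dvd_prime_pow hπ _).1 hadvd
  -- `x * pu ^ m * ι u = πK ^ i`
  have h1 : x * pu ^ m * ι u = πK ^ i := by
    rw [Units.ext_iff]
    have := congrArg (algebraMap (NumberField.RingOfIntegers K) K) hu
    rw [map_mul, map_pow, map_sub, map_one] at this
    rw [← ha] at this
    have hz : algebraMap (NumberField.RingOfIntegers K) K ζO = ζ := rfl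
    simpa [hpu, hπK, hι, Units.val_mul, Units.val_pow_eq_pow_val, mul_assoc, hz] using this
  refine ⟨ι u⁻¹ * (ι w) ^ m, mul_mem (hιmem _) (pow_mem (hιmem _) _), ?_⟩
  have hαne : (1 - ζ) ≠ 0 := sub_ne_zero.2 (Ne.symm hζne1)
  have hK1 := congrArg Units.val h1
  have hK2 := congrArg Units.val h2
  simp only [Units.val_mul, Units.val_pow_eq_pow_val, hpu, hπK, Units.val_mk0, hι,
    Units.coe_map, RingHom.toMonoidHom_eq_coe, MonoidHom.coe_coe] at hK1 hK2
  have hAune : (algebraMap (NumberField.RingOfIntegers K) K (u : NumberField.RingOfIntegers K))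
      ≠ 0 := by
    have := (ι u).ne_zero
    simpa [hι, Units.coe_map] using this
  have hAwne : (algebraMap (NumberField.RingOfIntegers K) K (w : NumberField.RingOfIntegers K))
      ≠ 0 := by
    have := (ι w).ne_zero
    simpa [hι, Units.coe_map] using this
  have hxK : (x : K) = (1 - ζ) ^ i /
      (((p : ℕ) : K) ^ m * algebraMap (NumberField.RingOfIntegers K) K
        (u : NumberField.RingOfIntegers K)) := by
    rw [eq_div_iff (mul_ne_zero (pow_ne_zero _ hq0) hAune), ← hK1]
    ring
  have hqK : (((p : ℕ)) : K) = (1 - ζ) ^ s /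
      algebraMap (NumberField.RingOfIntegers K) K (w : NumberField.RingOfIntegers K) :=
    (eq_div_iff hAwne).2 hK2
  have hxval : (ι u⁻¹ * (ι w) ^ m)⁻¹ * x = πK ^ ((i : ℤ) - (s : ℤ) * m) := by
    rw [map_inv, Units.ext_iff]
    simp only [Units.val_mul, Units.val_inv_eq_inv_val, Units.val_pow_eq_pow_val,
      Units.val_zpow_eq_zpow_val, hπK, Units.val_mk0, hι, Units.coe_map, RingHom.toMonoidHom_eq_coe, MonoidHom.coe_coe]
    rw [show ((i : ℤ) - (s : ℤ) * m) = ((i : ℤ)) - (((s * m : ℕ) : ℤ)) by push_cast; ring]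
    rw [zpow_sub₀ hαne, zpow_natCast, zpow_natCast]
    rw [hxK, hqK]
    rw [pow_mul]
    field_simp
    ring_nf
    simp [hAwne]
  rw [hxval]
  exact Subgroup.zpow_mem _ hπKC _

theorem aux_bijective [hfact : Fact ((p : ℕ)).Prime]
    [IsCyclotomicExtension {(p : ℕ) ^ (n' + 1)} ℚ K]
    (ζ : K) (hζ' : IsPrimitiveRoot ζ ((p ^ (n' + 1) : ℕ+) : ℕ))
    (hle : intUnits K ≤ pUnits K p)
    (hcomap : (cycPUnits K p (n' + 1) ζ ⊓ intUnits K).subgroupOf (intUnits K) ≤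
      Subgroup.comap (Subgroup.inclusion hle)
        ((cycPUnits K p (n' + 1) ζ).subgroupOf (pUnits K p))) :
    Function.Bijective
      (QuotientGroup.map
        ((cycPUnits K p (n' + 1) ζ ⊓ intUnits K).subgroupOf (intUnits K))
        ((cycPUnits K p (n' + 1) ζ).subgroupOf (pUnits K p))
        (Subgroup.inclusion hle) hcomap) := by
  constructor
  · intro y₁ y₂ h
    refine QuotientGroup.induction_on y₁ ?_ h
    clear h
    intro a h
    refine QuotientGroup.induction_on y₂ ?_ h
    clear h
    intro b h
    rw [QuotientGroup.map_mk, QuotientGroup.map_mk, QuotientGroup.eq,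
      Subgroup.mem_subgroupOf] at h
    rw [QuotientGroup.eq, Subgroup.mem_subgroupOf]
    refine ⟨?_, SetLike.coe_mem _⟩
    simpa using h
  · intro y
    refine QuotientGroup.induction_on y ?_
    intro x
    obtain ⟨e, he, hec⟩ := pUnits_decomp p n' ζ hζ' (x : Kˣ) (SetLike.coe_mem x)
    refine ⟨QuotientGroup.mk ⟨e, he⟩, ?_⟩
    rw [QuotientGroup.map_mk, QuotientGroup.eq, Subgroup.mem_subgroupOf]
    simpa using hec

end Aux

/-- **Lemma 6.2, first isomorphism.**  Let `p` be an odd prime, `n ≥ 1`,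
`K = ℚ(ζ_{p^n})` and `ζ` a primitive `p^n`-th root of unity.  Let `E` be the
unit group of the ring of integers, `ℰ` the group of `p`-units, `𝒞` the group
of cyclotomic `p`-units and `C = 𝒞 ⊓ E` the group of cyclotomic units.  The
homomorphism `E/C → ℰ/𝒞` induced by the inclusion `E ≤ ℰ` is bijective. -/
theorem intUnits_div_cycUnits_equiv_pUnits_div_cycPUnits
    (p : ℕ+) (hp : (p : ℕ).Prime) (hodd : Odd (p : ℕ)) (n : ℕ) (hn : 1 ≤ n)
    (ζ : CyclotomicField (p ^ n) ℚ) (hζ : IsPrimitiveRoot ζ ((p : ℕ) ^ n))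
    (hle : intUnits (CyclotomicField (p ^ n) ℚ) ≤ pUnits (CyclotomicField (p ^ n) ℚ) p) :
    Function.Bijective
      (QuotientGroup.map
        ((cycPUnits (CyclotomicField (p ^ n) ℚ) p n ζ ⊓
            intUnits (CyclotomicField (p ^ n) ℚ)).subgroupOf
          (intUnits (CyclotomicField (p ^ n) ℚ)))
        ((cycPUnits (CyclotomicField (p ^ n) ℚ) p n ζ).subgroupOf
          (pUnits (CyclotomicField (p ^ n) ℚ) p))
        (Subgroup.inclusion hle)
        (by
          intro x hx
          simp only [Subgroup.mem_comap, Subgroup.mem_subgroupOf, Subgroup.mem_inf,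
            Subgroup.coe_inclusion] at *
          exact hx.1)) := by
  obtain ⟨n', rfl⟩ : ∃ n', n = n' + 1 := ⟨n - 1, by omega⟩
  haveI : Fact (p : ℕ).Prime := ⟨hp⟩
  haveI : NeZero ((((p : ℕ) ^ (n' + 1) : ℕ) : ℚ)) := ⟨by exact_mod_cast pow_ne_zero _ hp.ne_zero⟩
  exact @aux_bijective p n' _ _ _ _ (CyclotomicField.isCyclotomicExtension ((p : ℕ) ^ (n' + 1)) ℚ) ζ (by rwa [PNat.pow_coe]) hle _
end

section
/- A ℤ_p-valued measure on ℤ_pˣ is determined by its moments: if μ : C(ℤ_pˣ, ℤ_p) →L[ℤ_p] ℤ_p is a continuous ℤ_p-linear functional such that μ applied to the continuous function u ↦ (u : ℤ_p)^k is zero for every integer k ≥ 0, then μ = 0. (Injectivity of the map Φ : ℤ_p[[ℤ_pˣ]] → ∏_{k≥1} ℤ_p(k), Φ(μ) = (∫_{ℤ_pˣ} x^{k−1} dμ(x))_k, from the Lemma of Section 4) -/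
open PadicInt Filter Topology Polynomial
open scoped fwdDiff Classical

namespace MomentsAux

variable {p : ℕ} [Fact p.Prime]

noncomputable def iota : C(ℤ_[p]ˣ, ℤ_[p]) := ⟨fun u => (u : ℤ_[p]), Units.continuous_val⟩

lemma isClosed_range_val : IsClosed (Set.range (Units.val : ℤ_[p]ˣ → ℤ_[p])) := by
  have : Set.range (Units.val : ℤ_[p]ˣ → ℤ_[p]) = (norm : ℤ_[p] → ℝ) ⁻¹' {1} := by
    ext x
    simp only [Set.mem_range, Set.mem_preimage, Set.mem_singleton_iff]
    rw [← PadicInt.isUnit_iff]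
    exact ⟨fun ⟨u, hu⟩ => hu ▸ u.isUnit, fun h => ⟨h.unit, rfl⟩⟩
  rw [this]
  exact isClosed_singleton.preimage continuous_norm

noncomputable def homeo : ℤ_[p]ˣ ≃ₜ Set.range (Units.val : ℤ_[p]ˣ → ℤ_[p]) :=
  Units.isOpenEmbedding_val.toIsEmbedding.toHomeomorph

noncomputable def extend (f : C(ℤ_[p]ˣ, ℤ_[p])) : C(ℤ_[p], ℤ_[p]) where
  toFun x := if hx : x ∈ Set.range (Units.val : ℤ_[p]ˣ → ℤ_[p]) then f (homeo.symm ⟨x, hx⟩)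
    else 0
  continuous_toFun := by
    have hso : IsOpen (Set.range (Units.val : ℤ_[p]ˣ → ℤ_[p])) :=
      Units.isOpenEmbedding_val.isOpen_range
    rw [continuous_iff_continuousAt]
    intro x
    rcases em (x ∈ Set.range (Units.val : ℤ_[p]ˣ → ℤ_[p])) with hx | hx
    · refine ContinuousOn.continuousAt ?_ (hso.mem_nhds hx)
      rw [continuousOn_iff_continuous_restrict]
      have : (Set.range (Units.val : ℤ_[p]ˣ → ℤ_[p])).domRestrict
          (fun x => if hx : x ∈ Set.range (Units.val : ℤ_[p]ˣ → ℤ_[p])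
            then f (homeo.symm ⟨x, hx⟩) else 0) = fun y => f (homeo.symm y) := by
        funext y
        simp only [Set.domRestrict_apply, dif_pos y.2]
      rw [this]
      exact f.continuous.comp homeo.symm.continuous
    · refine ContinuousOn.continuousAt ?_ ((isClosed_range_val.isOpen_compl).mem_nhds hx)
      rw [continuousOn_iff_continuous_restrict]
      have : (Set.range (Units.val : ℤ_[p]ˣ → ℤ_[p]))ᶜ.domRestrict
          (fun x => if hx : x ∈ Set.range (Units.val : ℤ_[p]ˣ → ℤ_[p])
            then f (homeo.symm ⟨x, hx⟩) else 0) = fun _ => 0 := by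
        funext y
        simp only [Set.domRestrict_apply, dif_neg y.2]
      rw [this]
      exact continuous_const

lemma extend_comp (f : C(ℤ_[p]ˣ, ℤ_[p])) : (extend f).comp iota = f := by
  ext u
  have hx : (u : ℤ_[p]) ∈ Set.range (Units.val : ℤ_[p]ˣ → ℤ_[p]) := ⟨u, rfl⟩
  simp only [ContinuousMap.comp_apply, extend, iota, ContinuousMap.coe_mk, dif_pos hx]
  congr 1
  rw [show homeo.symm ⟨(u : ℤ_[p]), hx⟩ = u from homeo.toEquiv.symm_apply_eq.mpr (Subtype.ext rfl)]




variable {p : ℕ} [Fact p.Prime]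


noncomputable def chooseMap (n : ℕ) : C(ℤ_[p], ℤ_[p]) :=
  ⟨fun x => Ring.choose x n, PadicInt.continuous_choose n⟩

variable (μ : C(ℤ_[p]ˣ, ℤ_[p]) →L[ℤ_[p]] ℤ_[p])
  (h : ∀ k : ℕ, μ ⟨fun u : ℤ_[p]ˣ => ((u : ℤ_[p]) ^ k), Units.continuous_val.pow k⟩ = 0)

include h in
lemma poly_zero (P : ℤ_[p][X]) : μ (P.toContinuousMap.comp iota) = 0 := by
  induction P using Polynomial.induction_on' with
  | add P Q hP hQ =>
    have : (P + Q).toContinuousMap.comp iota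
        = P.toContinuousMap.comp iota + Q.toContinuousMap.comp iota := by
      ext u
      simp [Polynomial.toContinuousMap]
    rw [this, map_add, hP, hQ, add_zero]
  | monomial n a =>
    have : (Polynomial.monomial n a).toContinuousMap.comp iota
        = a • (⟨fun u : ℤ_[p]ˣ => ((u : ℤ_[p]) ^ n), Units.continuous_val.pow n⟩
            : C(ℤ_[p]ˣ, ℤ_[p])) := by
      ext u
      simp [Polynomial.toContinuousMap, iota, Polynomial.eval_monomial, smul_eq_mul]
    rw [this, map_smul, h n, smul_zero]

include h in
lemma choose_zero (n : ℕ) : μ ((chooseMap n).comp iota) = 0 := by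
  have hfac : ((n.factorial : ℤ_[p])) ≠ 0 := Nat.cast_ne_zero.mpr n.factorial_ne_zero
  have key : (n.factorial : ℤ_[p]) * μ ((chooseMap n).comp iota) = 0 := by
    have h1 : (n.factorial : ℤ_[p]) • ((chooseMap n).comp iota)
        = (((descPochhammer ℤ n).map (Int.castRingHom ℤ_[p])).toContinuousMap).comp iota := by
      ext u
      have := Ring.descPochhammer_eq_factorial_smul_choose ((u : ℤ_[p])) n
      simp only [ContinuousMap.smul_apply, ContinuousMap.comp_apply, chooseMap,
        ContinuousMap.coe_mk, Polynomial.toContinuousMap_apply, iota]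
      rw [Polynomial.eval_map, ← algebraMap_int_eq, ← Polynomial.aeval_def, Polynomial.aeval_eq_smeval, this,
        nsmul_eq_mul, smul_eq_mul]
    calc (n.factorial : ℤ_[p]) * μ ((chooseMap n).comp iota)
        = μ ((n.factorial : ℤ_[p]) • ((chooseMap n).comp iota)) := by
          rw [map_smul, smul_eq_mul]
      _ = 0 := by rw [h1]; exact poly_zero μ h _
  rcases mul_eq_zero.mp key with h' | h'
  · exact absurd h' hfac
  · exact h'


end MomentsAux

open PadicInt Filter Topology Polynomial MomentsAux in

/-- A `ℤ_p`-valued measure on `ℤ_pˣ` (i.e. a continuous `ℤ_p`-linear functional on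
`C(ℤ_pˣ, ℤ_p)`) is determined by its moments: if `∫ x^k dμ = 0` for all `k ≥ 0`,
then `μ = 0`. -/
theorem measure_eq_zero_of_moments_eq_zero (p : ℕ) [Fact p.Prime]
    (μ : C(ℤ_[p]ˣ, ℤ_[p]) →L[ℤ_[p]] ℤ_[p])
    (h : ∀ k : ℕ, μ ⟨fun u : ℤ_[p]ˣ => ((u : ℤ_[p]) ^ k), Units.continuous_val.pow k⟩ = 0) :
    μ = 0 := by
  ext f
  rw [ContinuousLinearMap.zero_apply]
  -- the extension of f to ℤ_p by zero, and its ℚ_p-valued version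
  set F : C(ℤ_[p], ℤ_[p]) := MomentsAux.extend f with hF
  set coeMap : C(ℤ_[p], ℚ_[p]) := ⟨fun x => (x : ℚ_[p]), continuous_subtype_val⟩ with hcoeMap
  set J : C(ℤ_[p], ℤ_[p]) → C(ℤ_[p], ℚ_[p]) := fun g => coeMap.comp g with hJ
  have hJiso : Isometry J := by
    refine Isometry.of_dist_eq fun g₁ g₂ => ?_
    have hpt : ∀ x : ℤ_[p], dist (J g₁ x) (J g₂ x) = dist (g₁ x) (g₂ x) :=
      fun x => (Subtype.dist_eq (g₁ x) (g₂ x)).symm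
    refine le_antisymm ?_ ?_
    · refine (ContinuousMap.dist_le dist_nonneg).mpr fun x => ?_
      rw [hpt x]
      exact ContinuousMap.dist_apply_le_dist x
    · refine (ContinuousMap.dist_le dist_nonneg).mpr fun x => ?_
      rw [← hpt x]
      exact ContinuousMap.dist_apply_le_dist x
  -- forward differences commute with the coercion
  have hfwd : ∀ (n : ℕ) (g : ℤ_[p] → ℤ_[p]) (x : ℤ_[p]),
      (((Δ_[1])^[n] g x : ℤ_[p]) : ℚ_[p]) = (Δ_[1])^[n] (fun y => ((g y : ℤ_[p]) : ℚ_[p])) x := by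
    intro n
    induction n with
    | zero => intro g x; simp
    | succ n ih =>
      intro g x
      rw [Function.iterate_succ_apply, Function.iterate_succ_apply,
        show Δ_[(1 : ℤ_[p])] (fun y => ((g y : ℤ_[p]) : ℚ_[p]))
          = fun y => ((Δ_[(1 : ℤ_[p])] g y : ℤ_[p]) : ℚ_[p]) by
            funext y; simp [fwdDiff]]
      exact ih _ x
  -- the partial sums of the Mahler series of F, as ℤ_p-valued maps
  haveI : IsBoundedSMul ℤ_[p] ℚ_[p] := IsBoundedSMul.of_norm_smul_le fun r x => by
    rw [Algebra.smul_def, norm_mul]; rfl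
  set T : ℕ → C(ℤ_[p], ℤ_[p]) :=
    fun N => ∑ n ∈ Finset.range N, ((Δ_[1])^[n] (⇑F) 0) • chooseMap n with hT
  have hJT : ∀ N, J (T N) = ∑ n ∈ Finset.range N, mahlerTerm ((Δ_[1])^[n] (⇑(J F)) 0) n := by
    intro N
    ext x
    have lhs : J (T N) x
        = ∑ n ∈ Finset.range N, (((Δ_[1])^[n] (⇑F) 0 : ℤ_[p]) : ℚ_[p]) * ((Ring.choose x n : ℤ_[p]) : ℚ_[p]) := by
      show ((T N x : ℤ_[p]) : ℚ_[p]) = _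
      rw [hT]
      simp only [ContinuousMap.sum_apply, ContinuousMap.smul_apply, smul_eq_mul]
      rw [show (((∑ n ∈ Finset.range N, (Δ_[1])^[n] (⇑F) 0 * chooseMap n x : ℤ_[p])) : ℚ_[p])
          = ∑ n ∈ Finset.range N, (((Δ_[1])^[n] (⇑F) 0 * chooseMap n x : ℤ_[p]) : ℚ_[p])
        from map_sum PadicInt.Coe.ringHom _ _]
      exact Finset.sum_congr rfl fun n _ => PadicInt.coe_mul _ _
    rw [lhs, ContinuousMap.sum_apply]
    refine Finset.sum_congr rfl fun n _ => ?_
    rw [mahlerTerm_apply, mahler_apply, Algebra.smul_def, PadicInt.algebraMap_apply, mul_comm]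
    congr 1
    exact hfwd n (⇑F) 0
  -- Mahler's theorem: T N → F
  have hhs := (hasSum_mahler (J F)).tendsto_sum_nat
  have hTF : Tendsto T atTop (𝓝 F) := by
    rw [hJiso.isEmbedding.tendsto_nhds_iff]
    exact Tendsto.congr (fun N => (hJT N).symm) hhs
  -- conclude
  have hμcont : Continuous fun g : C(ℤ_[p], ℤ_[p]) => μ (g.comp iota) :=
    μ.continuous.comp (ContinuousMap.continuous_precomp iota)
  have h1 : Tendsto (fun N => μ ((T N).comp iota)) atTop (𝓝 (μ (F.comp iota))) :=
    ((hμcont.tendsto F).comp hTF)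
  have h2 : ∀ N, μ ((T N).comp iota) = 0 := by
    intro N
    have : (T N).comp iota
        = ∑ n ∈ Finset.range N, ((Δ_[1])^[n] (⇑F) 0) • ((chooseMap n).comp iota) := by
      ext u
      simp [hT, ContinuousMap.sum_apply]
    rw [this, map_sum]
    exact Finset.sum_eq_zero fun n _ => by
      rw [map_smul, choose_zero μ h n, smul_zero]
  have h3 : Tendsto (fun N => μ ((T N).comp iota)) atTop (𝓝 0) := by
    simp only [h2]
    exact tendsto_const_nhds
  have h4 := tendsto_nhds_unique h1 h3
  rwa [hF, MomentsAux.extend_comp] at h4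
end

section
/- Let φ : ℤ_p⟦X⟧ → ℤ_p⟦X⟧ be given by φ(f)(X) = f((1+X)^p − 1) and let D be the derivation D(f) = (1+X)·f′. Then for every f ∈ ℤ_p⟦X⟧ and every integer k ≥ 0, the constant coefficient of D^k(f − φ(f)) equals (1 − p^k) times the constant coefficient of D^k(f). (Power-series form of Lemma 4.3(ii)/Corollary 4.5: under the dictionary ∫_{ℤ_p} x^k dμ_f = constant coefficient of D^k f, the k-th moment of the measure attached to f − f((1+X)^p − 1) is (1 − p^k) ∫_{ℤ_p} x^k dμ_f) -/
/-- Substitution of `(1+X)^p - 1` into a formal power series over `ℤ_p`: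
`φ(f)(X) = f((1+X)^p - 1)`.  Since `(1+X)^p - 1` has zero constant coefficient,
the `k`-th coefficient of the substitution is the finite sum
`∑_{n ≤ k} (coeff n f) * coeff k (((1+X)^p - 1)^n)`. -/
noncomputable def phi (p : ℕ) [Fact p.Prime] (f : PowerSeries ℤ_[p]) : PowerSeries ℤ_[p] :=
  PowerSeries.mk fun k =>
    ∑ n ∈ Finset.range (k + 1),
      PowerSeries.coeff (R := ℤ_[p]) n f *
        PowerSeries.coeff (R := ℤ_[p]) k (((1 + PowerSeries.X) ^ p - 1) ^ n)

/-- The derivation `D(f) = (1+X)·f′`. -/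
noncomputable def Dop (p : ℕ) [Fact p.Prime] (f : PowerSeries ℤ_[p]) : PowerSeries ℤ_[p] :=
  (1 + PowerSeries.X) * PowerSeries.derivative ℤ_[p] f

section Aux

open PowerSeries Polynomial

variable (p : ℕ) [Fact p.Prime]

noncomputable def gg : PowerSeries ℤ_[p] := (1 + PowerSeries.X) ^ p - 1

lemma constantCoeff_gg : constantCoeff (R := ℤ_[p]) (gg p) = 0 := by
  simp [gg]

-- coeff m (h^n) = 0 for m < n if constantCoeff h = 0
lemma coeff_pow_eq_zero {R : Type*} [CommRing R] {h : PowerSeries R}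
    (hh : constantCoeff (R := R) h = 0) {m n : ℕ} (hmn : m < n) :
    PowerSeries.coeff (R := R) m (h ^ n) = 0 := by
  obtain ⟨t, ht⟩ := PowerSeries.X_dvd_iff.mpr hh
  have : (PowerSeries.X : PowerSeries R) ^ n ∣ h ^ n := pow_dvd_pow_of_dvd ⟨t, ht⟩ n
  obtain ⟨u, hu⟩ := this
  rw [hu, PowerSeries.coeff_X_pow_mul']
  simp [Nat.not_le_of_lt hmn]

noncomputable def SS (Q : Polynomial ℤ_[p]) : PowerSeries ℤ_[p] :=
  Q.eval₂ (PowerSeries.C (R := ℤ_[p])) (gg p)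

lemma coeff_SS (Q : Polynomial ℤ_[p]) (m : ℕ) :
    PowerSeries.coeff (R := ℤ_[p]) m (SS p Q) =
      ∑ n ∈ Finset.range (m + 1), Q.coeff n * PowerSeries.coeff (R := ℤ_[p]) m ((gg p) ^ n) := by
  rw [SS, Polynomial.eval₂_eq_sum_range, map_sum]
  set N := max (Q.natDegree + 1) (m + 1) with hN
  have h1 : Finset.range (Q.natDegree + 1) ⊆ Finset.range N := by
    apply Finset.range_subset_range.mpr; exact le_max_left _ _
  have h2 : Finset.range (m + 1) ⊆ Finset.range N := by
    apply Finset.range_subset_range.mpr; exact le_max_right _ _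
  calc ∑ n ∈ Finset.range (Q.natDegree + 1),
        PowerSeries.coeff (R := ℤ_[p]) m (PowerSeries.C (R := ℤ_[p]) (Q.coeff n) * (gg p) ^ n)
      = ∑ n ∈ Finset.range N,
        PowerSeries.coeff (R := ℤ_[p]) m (PowerSeries.C (R := ℤ_[p]) (Q.coeff n) * (gg p) ^ n) := by
        apply Finset.sum_subset h1
        intro n _ hn
        rw [Finset.mem_range, not_lt] at hn
        rw [Polynomial.coeff_eq_zero_of_natDegree_lt (by omega), map_zero, zero_mul,
          map_zero]
    _ = ∑ n ∈ Finset.range N, Q.coeff n * PowerSeries.coeff (R := ℤ_[p]) m ((gg p) ^ n) := by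
        apply Finset.sum_congr rfl
        intro n _
        rw [PowerSeries.coeff_C_mul]
    _ = ∑ n ∈ Finset.range (m + 1), Q.coeff n * PowerSeries.coeff (R := ℤ_[p]) m ((gg p) ^ n) := by
        refine (Finset.sum_subset h2 ?_).symm
        intro n _ hn
        rw [Finset.mem_range, not_lt] at hn
        rw [coeff_pow_eq_zero (constantCoeff_gg p) (by omega), mul_zero]

lemma coeff_phi (f : PowerSeries ℤ_[p]) (m : ℕ) :
    PowerSeries.coeff (R := ℤ_[p]) m (phi p f) =
      ∑ n ∈ Finset.range (m + 1),
        PowerSeries.coeff (R := ℤ_[p]) n f * PowerSeries.coeff (R := ℤ_[p]) m ((gg p) ^ n) := by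
  simp [phi, gg]

lemma coeff_phi_eq_SS (f : PowerSeries ℤ_[p]) (m N : ℕ) (h : m < N) :
    PowerSeries.coeff (R := ℤ_[p]) m (phi p f) =
      PowerSeries.coeff (R := ℤ_[p]) m (SS p (PowerSeries.trunc N f)) := by
  rw [coeff_phi, coeff_SS]
  apply Finset.sum_congr rfl
  intro n hn
  rw [Finset.mem_range] at hn
  rw [PowerSeries.coeff_trunc, if_pos (by omega)]

-- chain rule for polynomial substitution into a power series
lemma derivative_SS (Q : Polynomial ℤ_[p]) :
    PowerSeries.derivative ℤ_[p] (SS p Q) =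
      SS p (Polynomial.derivative Q) * PowerSeries.derivative ℤ_[p] (gg p) := by
  induction Q using Polynomial.induction_on with
  | C a => simp [SS]
  | add f g hf hg =>
      simp only [SS] at hf hg ⊢
      rw [Polynomial.eval₂_add, map_add, hf, hg, Polynomial.derivative_add,
        Polynomial.eval₂_add, add_mul]
  | monomial n a _ =>
      simp only [SS, Polynomial.derivative_mul, Polynomial.derivative_C,
        Polynomial.derivative_X_pow, Polynomial.eval₂_mul, Polynomial.eval₂_C,
        Polynomial.eval₂_pow, Polynomial.eval₂_X, Polynomial.eval₂_natCast,
        zero_mul, zero_add]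
      rw [Derivation.leibniz, PowerSeries.derivative_C, Derivation.leibniz_pow]
      simp only [smul_eq_mul, nsmul_eq_mul, smul_zero, add_zero]
      rw [map_natCast]
      ring

lemma one_add_X_mul_derivative_gg :
    (1 + PowerSeries.X) * PowerSeries.derivative ℤ_[p] (gg p) =
      (p : ℤ_[p]) • (1 + gg p) := by
  have hp : p - 1 + 1 = p := Nat.succ_pred_eq_of_pos (Fact.out : p.Prime).pos
  rw [gg, map_sub, Derivation.map_one_eq_zero, sub_zero, Derivation.leibniz_pow]
  rw [PowerSeries.smul_eq_C_mul, map_natCast]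
  simp only [map_add, Derivation.map_one_eq_zero, PowerSeries.derivative_X, zero_add,
    smul_eq_mul, mul_one, nsmul_eq_mul]
  rw [show (1 : PowerSeries ℤ_[p]) + ((1 + PowerSeries.X) ^ p - 1)
      = (1 + PowerSeries.X) ^ p by ring]
  have hpow : (1 + PowerSeries.X : PowerSeries ℤ_[p]) ^ (p - 1) * (1 + PowerSeries.X)
      = (1 + PowerSeries.X) ^ p := by
    rw [← pow_succ, hp]
  rw [← hpow]
  ring

lemma Dop_SS (Q : Polynomial ℤ_[p]) :
    Dop p (SS p Q) =
      (p : ℤ_[p]) • SS p ((1 + Polynomial.X) * Polynomial.derivative Q) := by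
  rw [Dop, derivative_SS]
  have : SS p ((1 + Polynomial.X) * Polynomial.derivative Q) =
      (1 + gg p) * SS p (Polynomial.derivative Q) := by
    simp only [SS, Polynomial.eval₂_mul, Polynomial.eval₂_add, Polynomial.eval₂_one,
      Polynomial.eval₂_X]
  rw [this, ← mul_assoc, mul_comm (1 + PowerSeries.X), mul_assoc,
    one_add_X_mul_derivative_gg, mul_smul_comm, mul_comm (SS p (Polynomial.derivative Q))]

lemma coeff_Dop (h : PowerSeries ℤ_[p]) (m : ℕ) :
    PowerSeries.coeff (R := ℤ_[p]) m (Dop p h) =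
      PowerSeries.coeff (R := ℤ_[p]) (m + 1) h * (m + 1) + PowerSeries.coeff (R := ℤ_[p]) m h * m := by
  rw [Dop, add_mul, one_mul, map_add, PowerSeries.coeff_derivative]
  congr 1
  cases m with
  | zero => simp
  | succ j =>
      rw [PowerSeries.coeff_succ_X_mul, PowerSeries.coeff_derivative]
      push_cast
      ring

lemma Dop_phi (f : PowerSeries ℤ_[p]) :
    Dop p (phi p f) = (p : ℤ_[p]) • phi p (Dop p f) := by
  ext m
  set Q : Polynomial ℤ_[p] := PowerSeries.trunc (m + 2) f with hQ
  have hQc : ∀ j < m + 2, Q.coeff j = PowerSeries.coeff (R := ℤ_[p]) j f := by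
    intro j hj
    rw [hQ, PowerSeries.coeff_trunc, if_pos hj]
  have step1 : PowerSeries.coeff (R := ℤ_[p]) m (Dop p (phi p f)) =
      PowerSeries.coeff (R := ℤ_[p]) m (Dop p (SS p Q)) := by
    rw [coeff_Dop, coeff_Dop, coeff_phi_eq_SS p f m (m + 2) (by omega),
      coeff_phi_eq_SS p f (m + 1) (m + 2) (by omega)]
  have step2 : PowerSeries.coeff (R := ℤ_[p]) m
      (SS p ((1 + Polynomial.X) * Polynomial.derivative Q)) =
      PowerSeries.coeff (R := ℤ_[p]) m (phi p (Dop p f)) := by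
    rw [coeff_SS, coeff_phi]
    apply Finset.sum_congr rfl
    intro n hn
    rw [Finset.mem_range] at hn
    congr 1
    rw [coeff_Dop]
    rw [add_mul, one_mul, Polynomial.coeff_add, Polynomial.coeff_derivative,
      hQc (n + 1) (by omega)]
    cases n with
    | zero => simp
    | succ j =>
        rw [Polynomial.coeff_X_mul, Polynomial.coeff_derivative, hQc (j + 1) (by omega)]
        push_cast
        ring
  rw [step1, Dop_SS, map_smul, map_smul, step2]

lemma constantCoeff_phi (f : PowerSeries ℤ_[p]) :
    PowerSeries.constantCoeff (R := ℤ_[p]) (phi p f) = PowerSeries.constantCoeff (R := ℤ_[p]) f := by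
  rw [← PowerSeries.coeff_zero_eq_constantCoeff_apply, coeff_phi]
  simp

lemma Dop_smul (c : ℤ_[p]) (h : PowerSeries ℤ_[p]) :
    Dop p (c • h) = c • Dop p h := by
  rw [Dop, Dop, Derivation.map_smul, mul_smul_comm]

lemma Dop_iterate_smul (k : ℕ) (c : ℤ_[p]) (h : PowerSeries ℤ_[p]) :
    (Dop p)^[k] (c • h) = c • (Dop p)^[k] h := by
  induction k generalizing h with
  | zero => simp
  | succ k ih => rw [Function.iterate_succ_apply, Function.iterate_succ_apply, Dop_smul, ih]

lemma constantCoeff_Dop_iterate_phi (k : ℕ) (f : PowerSeries ℤ_[p]) :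
    PowerSeries.constantCoeff (R := ℤ_[p]) ((Dop p)^[k] (phi p f)) =
      (p : ℤ_[p]) ^ k * PowerSeries.constantCoeff (R := ℤ_[p]) ((Dop p)^[k] f) := by
  induction k generalizing f with
  | zero => simpa using constantCoeff_phi p f
  | succ k ih =>
      rw [Function.iterate_succ_apply, Dop_phi, Dop_iterate_smul,
        PowerSeries.smul_eq_C_mul, map_mul, PowerSeries.constantCoeff_C, ih,
        Function.iterate_succ_apply]
      ring

lemma Dop_sub (a b : PowerSeries ℤ_[p]) : Dop p (a - b) = Dop p a - Dop p b := by
  rw [Dop, Dop, Dop, map_sub, mul_sub]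

lemma Dop_iterate_sub (k : ℕ) (a b : PowerSeries ℤ_[p]) :
    (Dop p)^[k] (a - b) = (Dop p)^[k] a - (Dop p)^[k] b := by
  induction k generalizing a b with
  | zero => simp
  | succ k ih => rw [Function.iterate_succ_apply, Function.iterate_succ_apply,
      Function.iterate_succ_apply, Dop_sub, ih]

end Aux

/-- For every `f ∈ ℤ_p⟦X⟧` and every `k ≥ 0`, the constant coefficient of
`D^k(f - φ(f))` equals `(1 - p^k)` times the constant coefficient of `D^k(f)`. -/
theorem constantCoeff_Dop_iterate_sub_phi (p : ℕ) [Fact p.Prime]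
    (f : PowerSeries ℤ_[p]) (k : ℕ) :
    PowerSeries.constantCoeff (R := ℤ_[p]) ((Dop p)^[k] (f - phi p f)) =
      (1 - (p : ℤ_[p]) ^ k) * PowerSeries.constantCoeff (R := ℤ_[p]) ((Dop p)^[k] f) := by
  rw [Dop_iterate_sub p, map_sub, constantCoeff_Dop_iterate_phi p]
  ring
end

section
/- Let f ∈ ℤ_p⟦X⟧ be a formal power series such that for every integer n ≥ 1 the power series Φ_{p^n}(1+X) divides f in ℤ_p⟦X⟧, where Φ_{p^n} is the p^n-th cyclotomic polynomial over ℤ_p. Then f = 0. (Algebraic form of the uniqueness assertion in Coleman's theorem (Theorem 4.1): a power series over ℤ_p vanishing at ζ − 1 for primitive p^n-th roots of unity ζ of every level n is identically zero, since f(ζ−1) = 0 is equivalent to divisibility by Φ_{p^n}(1+X)) -/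
open Polynomial PowerSeries

section Aux

variable (p : ℕ) [Fact p.Prime]

/-- The polynomial `Φ_{p^n}(1+X)` over `ℤ_p`. -/
private noncomputable def Phi (n : ℕ) : Polynomial ℤ_[p] :=
  (Polynomial.cyclotomic (p ^ n) ℤ_[p]).comp (Polynomial.X + 1)

private lemma Phi_eq_map (n : ℕ) :
    Phi p n = Polynomial.map (Int.castRingHom ℤ_[p])
      ((Polynomial.cyclotomic (p ^ n) ℤ).comp (Polynomial.X + 1)) := by
  rw [Polynomial.map_comp, Polynomial.map_cyclotomic, Polynomial.map_add, Polynomial.map_X,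
    Polynomial.map_one, Phi]

private lemma Phi_monic (n : ℕ) : (Phi p n).Monic := by
  rw [Phi, show (Polynomial.X + 1 : Polynomial ℤ_[p]) = Polynomial.X + Polynomial.C 1 by simp]
  exact (Polynomial.cyclotomic.monic _ _).comp_X_add_C 1

private lemma Phi_natDegree (n : ℕ) : (Phi p n).natDegree = (p ^ n).totient := by
  rw [Phi, Polynomial.natDegree_comp,
    show (Polynomial.X + 1 : Polynomial ℤ_[p]) = Polynomial.X + Polynomial.C 1 by simp,
    Polynomial.natDegree_X_add_C, mul_one, Polynomial.natDegree_cyclotomic]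

private lemma Phi_coeff_dvd (n : ℕ) (hn : 1 ≤ n) {i : ℕ} (hi : i < (Phi p n).natDegree) :
    (p : ℤ_[p]) ∣ (Phi p n).coeff i := by
  obtain ⟨m, rfl⟩ := Nat.exists_eq_add_of_le hn
  have hE := cyclotomic_prime_pow_comp_X_add_one_isEisensteinAt p m
  have hdeg : ((Polynomial.cyclotomic (p ^ (1 + m)) ℤ).comp (Polynomial.X + 1)).natDegree
      = (Phi p (1 + m)).natDegree := by
    rw [Phi_eq_map]
    exact (Polynomial.natDegree_map_eq_of_injective
      (by exact_mod_cast Int.cast_injective) _).symm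
  rw [add_comm 1 m] at hdeg hi ⊢
  have := hE.mem (n := i) (by omega)
  rw [Ideal.submodule_span_eq, Ideal.mem_span_singleton] at this
  obtain ⟨c, hc⟩ := this
  rw [Phi_eq_map, Polynomial.coeff_map, hc]
  exact ⟨(c : ℤ_[p]), by simp⟩

private lemma totient_lt (k : ℕ) : k < (p ^ (k + 1)).totient := by
  have hp : p.Prime := Fact.out
  rw [Nat.totient_prime_pow hp (Nat.succ_pos k)]
  have h1 : k < p ^ k := Nat.lt_pow_self hp.one_lt
  have h2 : 1 ≤ p - 1 := by have := hp.two_le; omega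
  calc k < p ^ k := h1
    _ = p ^ k * 1 := (mul_one _).symm
    _ ≤ p ^ (k + 1 - 1) * (p - 1) := by
        simp only [Nat.add_sub_cancel]; exact Nat.mul_le_mul_left _ h2

/-- If `p` divides every coefficient of a power series, it factors out `C p`. -/
private lemma exists_of_dvd_coeff (g : PowerSeries ℤ_[p])
    (h : ∀ k, (p : ℤ_[p]) ∣ PowerSeries.coeff k g) :
    ∃ g', g = PowerSeries.C (p : ℤ_[p]) * g' := by
  refine ⟨PowerSeries.mk fun k => (h k).choose, ?_⟩
  ext k
  rw [PowerSeries.coeff_C_mul, PowerSeries.coeff_mk]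
  exact (h k).choose_spec

/-- If `Φ_n * q` has all coefficients divisible by `p`, so does `q`. -/
private lemma dvd_coeff_of_dvd_mul (n : ℕ) (hn : 1 ≤ n) (q : PowerSeries ℤ_[p])
    (h : ∀ k, (p : ℤ_[p]) ∣ PowerSeries.coeff k (((Phi p n : Polynomial ℤ_[p]) :
      PowerSeries ℤ_[p]) * q)) :
    ∀ k, (p : ℤ_[p]) ∣ PowerSeries.coeff k q := by
  intro k
  set d := (Phi p n).natDegree with hd
  have hmem : ((d, k) : ℕ × ℕ) ∈ Finset.HasAntidiagonal.antidiagonal (k + d) := by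
    rw [Finset.HasAntidiagonal.mem_antidiagonal]; omega
  have hsum := PowerSeries.coeff_mul (k + d) ((Phi p n : PowerSeries ℤ_[p])) q
  rw [← Finset.add_sum_erase _ _ hmem] at hsum
  have herase : (p : ℤ_[p]) ∣ ∑ x ∈ (Finset.HasAntidiagonal.antidiagonal (k + d)).erase (d, k),
      PowerSeries.coeff x.1 ((Phi p n : PowerSeries ℤ_[p])) *
        PowerSeries.coeff x.2 q := by
    refine Finset.dvd_sum fun x hx => ?_
    have hx1 := Finset.HasAntidiagonal.mem_antidiagonal.mp (Finset.mem_of_mem_erase hx)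
    have hxne := Finset.ne_of_mem_erase hx
    rcases lt_or_ge x.1 d with hlt | hge
    · exact Dvd.dvd.mul_right (by
        rw [Polynomial.coeff_coe]; exact Phi_coeff_dvd p n hn hlt) _
    · have hx1d : x.1 ≠ d := by
        intro hh; apply hxne; rw [Prod.ext_iff]; constructor
        · exact hh
        · omega
      have : d < x.1 := lt_of_le_of_ne hge (Ne.symm hx1d)
      rw [Polynomial.coeff_coe, Polynomial.coeff_eq_zero_of_natDegree_lt this, zero_mul]
      exact dvd_zero _
  have hdk : PowerSeries.coeff d ((Phi p n : PowerSeries ℤ_[p])) = 1 := by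
    rw [Polynomial.coeff_coe]; exact Phi_monic p n
  have h1 : (p : ℤ_[p]) ∣ PowerSeries.coeff d ((Phi p n : PowerSeries ℤ_[p])) *
      PowerSeries.coeff k q + ∑ x ∈ (Finset.HasAntidiagonal.antidiagonal (k + d)).erase (d, k),
      PowerSeries.coeff x.1 ((Phi p n : PowerSeries ℤ_[p])) *
        PowerSeries.coeff x.2 q := hsum ▸ h (k + d)
  have := (dvd_add_right herase).mp (by rwa [add_comm] at h1)
  rwa [hdk, one_mul] at this

end Aux

/-- If `f ∈ ℤ_p⟦X⟧` is divisible by `Φ_{p^n}(1+X)` (the `p^n`-th cyclotomic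
polynomial evaluated at `1+X`, regarded as a power series) for every `n ≥ 1`,
then `f = 0`. -/
theorem eq_zero_of_forall_cyclotomic_comp_dvd (p : ℕ) [Fact p.Prime]
    (f : PowerSeries ℤ_[p])
    (h : ∀ n : ℕ, 1 ≤ n →
      (((Polynomial.cyclotomic (p ^ n) ℤ_[p]).comp (Polynomial.X + 1) :
        Polynomial ℤ_[p]) : PowerSeries ℤ_[p]) ∣ f) :
    f = 0 := by
  have hp : p.Prime := Fact.out
  have hpz : (p : ℤ_[p]) ≠ 0 := by
    exact_mod_cast Nat.cast_ne_zero.mpr hp.ne_zero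
  -- main induction: f = C p ^ j * g with Φ_n ∣ g for all n ≥ 1
  have key : ∀ j : ℕ, ∃ g : PowerSeries ℤ_[p],
      (∀ n : ℕ, 1 ≤ n → ((Phi p n : Polynomial ℤ_[p]) : PowerSeries ℤ_[p]) ∣ g) ∧
      f = (PowerSeries.C (p : ℤ_[p])) ^ j * g := by
    intro j
    induction j with
    | zero => exact ⟨f, fun n hn => h n hn, by rw [pow_zero, one_mul]⟩
    | succ j ih =>
      obtain ⟨g, hg, hfg⟩ := ih
      -- every coefficient of g is divisible by p
      have hcoeff : ∀ k, (p : ℤ_[p]) ∣ PowerSeries.coeff k g := by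
        intro k
        obtain ⟨q, hq⟩ := hg (k + 1) (Nat.le_add_left 1 k)
        rw [hq, PowerSeries.coeff_mul]
        refine Finset.dvd_sum fun x hx => ?_
        have hx1 := Finset.HasAntidiagonal.mem_antidiagonal.mp hx
        have hlt : x.1 < (Phi p (k + 1)).natDegree := by
          rw [Phi_natDegree]
          have := totient_lt p k
          omega
        exact Dvd.dvd.mul_right (by
          rw [Polynomial.coeff_coe]
          exact Phi_coeff_dvd p (k + 1) (Nat.le_add_left 1 k) hlt) _
      obtain ⟨g', hg'⟩ := exists_of_dvd_coeff p g hcoeff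
      refine ⟨g', fun n hn => ?_, by rw [hfg, hg', pow_succ]; ring⟩
      -- Φ_n ∣ g' : from Φ_n ∣ C p * g'
      obtain ⟨q, hq⟩ := hg n hn
      rw [hg'] at hq
      have hq' : ∀ k, (p : ℤ_[p]) ∣ PowerSeries.coeff k
          (((Phi p n : Polynomial ℤ_[p]) : PowerSeries ℤ_[p]) * q) := by
        intro k
        rw [← hq, PowerSeries.coeff_C_mul]
        exact Dvd.intro _ rfl
      obtain ⟨q', hq2⟩ := exists_of_dvd_coeff p q (dvd_coeff_of_dvd_mul p n hn q hq')
      refine ⟨q', ?_⟩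
      have hcancel : PowerSeries.C (p : ℤ_[p]) * g' =
          PowerSeries.C (p : ℤ_[p]) * (((Phi p n : Polynomial ℤ_[p]) : PowerSeries ℤ_[p]) * q') := by
        rw [hq, hq2]; ring
      have hCne : (PowerSeries.C (p : ℤ_[p])) ≠ 0 := fun hh =>
        hpz (by simpa using congrArg (PowerSeries.constantCoeff) hh)
      exact mul_left_cancel₀ hCne hcancel
  -- conclude: every coefficient of f is divisible by p^j for all j, hence zero
  ext k
  rw [map_zero]
  have hdvd : ∀ j : ℕ, ((p : ℤ_[p]) ^ j) ∣ PowerSeries.coeff k f := by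
    intro j
    obtain ⟨g, -, hfg⟩ := key j
    rw [hfg, PowerSeries.coeff_mul]
    refine Finset.dvd_sum fun x _ => Dvd.dvd.mul_right ?_ _
    rw [← map_pow, PowerSeries.coeff_C]
    split <;> simp
  by_contra hne
  have hpos : 0 < ‖PowerSeries.coeff k f‖ := norm_pos_iff.mpr hne
  have hlt1 : ‖(p : ℤ_[p])‖ < 1 := by
    rw [PadicInt.norm_p]
    rw [inv_lt_one_iff₀]
    right
    exact_mod_cast hp.one_lt
  obtain ⟨j, hj⟩ := exists_pow_lt_of_lt_one hpos hlt1
  obtain ⟨y, hy⟩ := hdvd j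
  have : ‖PowerSeries.coeff k f‖ ≤ ‖(p : ℤ_[p])‖ ^ j := by
    rw [hy, norm_mul, norm_pow]
    calc ‖(p : ℤ_[p])‖ ^ j * ‖y‖ ≤ ‖(p : ℤ_[p])‖ ^ j * 1 :=
        mul_le_mul_of_nonneg_left (PadicInt.norm_le_one y) (by positivity)
      _ = ‖(p : ℤ_[p])‖ ^ j := mul_one _
  linarith
end
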